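/- For every n, the n-th approximant 𝐜_n = (c_n, c_n) of the 2-dimensional Cantor function maps each of the 4ⁿ squares of CD_n (each of edge 3⁻ⁿ) affinely onto a dyadic square of edge 2⁻ⁿ in [0,1]², and the images of these 4ⁿ squares form exactly the 2ⁿ-fold dyadic subdivision of [0,1]²; in particular 𝐜_n restricted to CD_n is surjective onto [0,1]². -/

import Mathlib

/-- The approximating sequence of the Cantor function. -/
noncomputable def cseq : ℕ → ℝ → ℝ
  | 0 => fun x => x
  | n + 1 => fun x =>
      if x ≤ 1/3 then cseq n (3 * x) / 2
      else if x ≤ 2/3 then 1/2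
      else cseq n (3 * x - 2) / 2 + 1/2

/-- The `n`-th approximant of the 2-dimensional Cantor function. -/
noncomputable def cmap (n : ℕ) (p : ℝ × ℝ) : ℝ × ℝ := (cseq n p.1, cseq n p.2)

/-- The four similitudes of the Cantor-dust IFS. -/
noncomputable def ifsMap : Fin 4 → ℝ × ℝ → ℝ × ℝ
  | 0 => fun p => (p.1 / 3, p.2 / 3)
  | 1 => fun p => (p.1 / 3, p.2 / 3 + 2/3)
  | 2 => fun p => (p.1 / 3 + 2/3, p.2 / 3)
  | 3 => fun p => (p.1 / 3 + 2/3, p.2 / 3 + 2/3)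

/-- `f_𝐬 = f_{s₁} ∘ ⋯ ∘ f_{sₙ}`. -/
noncomputable def ifsComp {n : ℕ} (s : Fin n → Fin 4) : ℝ × ℝ → ℝ × ℝ :=
  (List.ofFn s).foldr (fun i g => ifsMap i ∘ g) id

/-- A dyadic square of edge `2⁻ⁿ` with lower-left corner `(i/2ⁿ, j/2ⁿ)`. -/
noncomputable def dyadicSq (n i j : ℕ) : Set (ℝ × ℝ) :=
  Set.Icc ((i : ℝ) / 2 ^ n, (j : ℝ) / 2 ^ n) (((i : ℝ) + 1) / 2 ^ n, ((j : ℝ) + 1) / 2 ^ n)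

/-! ### Auxiliary one-dimensional machinery -/

/-- One-dimensional contraction maps. -/
noncomputable def gm (b : Fin 2) (x : ℝ) : ℝ := x / 3 + ((b : ℕ) : ℝ) * (2/3)

/-- Composite of one-dimensional maps. -/
noncomputable def gComp {n : ℕ} (t : Fin n → Fin 2) : ℝ → ℝ :=
  (List.ofFn t).foldr (fun b h => gm b ∘ h) id

/-- Binary index attached to a word. -/
def idx : {n : ℕ} → (Fin n → Fin 2) → ℕ
  | 0, _ => 0
  | n + 1, t => (t 0).val * 2 ^ n + idx (Fin.tail t)

lemma gComp_zero (t : Fin 0 → Fin 2) : gComp t = id := by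
  simp [gComp]

lemma gComp_succ {n : ℕ} (t : Fin (n+1) → Fin 2) :
    gComp t = gm (t 0) ∘ gComp (Fin.tail t) := by
  simp only [gComp, List.ofFn_succ, List.foldr_cons]
  rfl

lemma cseq_succ (n : ℕ) (x : ℝ) : cseq (n+1) x =
    if x ≤ 1/3 then cseq n (3 * x) / 2
    else if x ≤ 2/3 then 1/2
    else cseq n (3 * x - 2) / 2 + 1/2 := rfl

lemma cseq_zero (n : ℕ) : cseq n 0 = 0 := by
  induction n with
  | zero => rfl
  | succ n ih => rw [cseq_succ]; norm_num [ih]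

lemma key (n : ℕ) (t : Fin n → Fin 2) :
    idx t < 2 ^ n ∧ ∃ c : ℝ, (∀ x, gComp t x = x / 3 ^ n + c) ∧
      ∀ x ∈ Set.Icc (0:ℝ) 1, gComp t x ∈ Set.Icc (0:ℝ) 1 ∧
        cseq n (gComp t x) = ((idx t : ℝ) + x) / 2 ^ n := by
  induction n with
  | zero =>
    refine ⟨by norm_num [idx], 0, fun x => by simp [gComp_zero], ?_⟩
    intro x hx
    refine ⟨by simpa [gComp_zero] using hx, ?_⟩
    simp [gComp_zero, idx, cseq]
  | succ n ih =>
    obtain ⟨hlt, c, hc, hmain⟩ := ih (Fin.tail t)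
    have hidx : idx t = (t 0).val * 2 ^ n + idx (Fin.tail t) := rfl
    have hg : ∀ x, gComp t x = gm (t 0) (gComp (Fin.tail t) x) := by
      intro x; rw [gComp_succ]; rfl
    have hp : 2 ^ (n+1) = 2 ^ n * 2 := pow_succ 2 n
    have h2 : (2:ℝ) ^ n ≠ 0 := by positivity
    have hb : (t 0).val = 0 ∨ (t 0).val = 1 := by omega
    rcases hb with hb | hb
    · have hidx0 : idx t = idx (Fin.tail t) := by rw [hidx, hb, zero_mul, zero_add]
      refine ⟨by omega, c / 3, ?_, ?_⟩
      · intro x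
        rw [hg x, hc x, gm, hb, pow_succ]
        push_cast
        ring
      · intro x hx
        obtain ⟨hy, hval⟩ := hmain x hx
        have hgm : gComp t x = gComp (Fin.tail t) x / 3 := by
          rw [hg x, gm, hb]; push_cast; ring
        obtain ⟨hy0, hy1⟩ := hy
        have hidxr : (idx t : ℝ) = (idx (Fin.tail t) : ℝ) := by
          rw [hidx, hb]; push_cast; ring
        refine ⟨⟨by rw [hgm]; linarith, by rw [hgm]; linarith⟩, ?_⟩
        rw [hgm, cseq_succ, if_pos (by linarith : gComp (Fin.tail t) x / 3 ≤ 1/3)]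
        have h3 : 3 * (gComp (Fin.tail t) x / 3) = gComp (Fin.tail t) x := by ring
        rw [h3, hval, hidxr, pow_succ]
        ring
    · have hidx1 : idx t = 2 ^ n + idx (Fin.tail t) := by rw [hidx, hb, one_mul]
      refine ⟨by omega, c / 3 + 2/3, ?_, ?_⟩
      · intro x
        rw [hg x, hc x, gm, hb, pow_succ]
        push_cast
        ring
      · intro x hx
        obtain ⟨hy, hval⟩ := hmain x hx
        have hgm : gComp t x = gComp (Fin.tail t) x / 3 + 2/3 := by
          rw [hg x, gm, hb]; push_cast; ring
        obtain ⟨hy0, hy1⟩ := hy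
        have hidxr : (idx t : ℝ) = 2 ^ n + (idx (Fin.tail t) : ℝ) := by
          rw [hidx, hb]; push_cast; ring
        refine ⟨⟨by rw [hgm]; linarith, by rw [hgm]; linarith⟩, ?_⟩
        rw [hgm, cseq_succ,
          if_neg (by linarith : ¬ gComp (Fin.tail t) x / 3 + 2/3 ≤ 1/3)]
        rcases eq_or_lt_of_le hy0 with h0 | h0
        · -- gComp (Fin.tail t) x = 0
          rw [if_pos (by rw [← h0]; norm_num)]
          rw [← h0, cseq_zero] at hval
          have hxge := hx.1
          have hige : (0:ℝ) ≤ (idx (Fin.tail t) : ℝ) := Nat.cast_nonneg _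
          have hnum : (idx (Fin.tail t) : ℝ) + x = 0 := by
            field_simp at hval
            linarith [hval.symm]
          have hx0 : x = 0 := by linarith
          have hi0 : (idx (Fin.tail t) : ℝ) = 0 := by linarith
          rw [hidxr, hi0, hx0, pow_succ]
          field_simp
          ring
        · rw [if_neg (by linarith : ¬ gComp (Fin.tail t) x / 3 + 2/3 ≤ 2/3)]
          have h3 : 3 * (gComp (Fin.tail t) x / 3 + 2/3) - 2 = gComp (Fin.tail t) x := by
            ring
          rw [h3, hval, hidxr, pow_succ]
          field_simp
          ring

lemma idx_surj : ∀ (n i : ℕ), i < 2 ^ n → ∃ t : Fin n → Fin 2, idx t = i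
  | 0, i, hi => ⟨Fin.elim0, by interval_cases i; rfl⟩
  | n + 1, i, hi => by
    have hp : 2 ^ (n+1) = 2 ^ n * 2 := pow_succ 2 n
    by_cases h : i < 2 ^ n
    · obtain ⟨t', ht'⟩ := idx_surj n i h
      refine ⟨Fin.cons 0 t', ?_⟩
      simp [idx, Fin.cons_zero, Fin.tail_cons, ht']
    · obtain ⟨t', ht'⟩ := idx_surj n (i - 2 ^ n) (by omega)
      refine ⟨Fin.cons 1 t', ?_⟩
      have h1 : idx (Fin.cons (1 : Fin 2) t') = 2 ^ n + (i - 2 ^ n) := by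
        simp [idx, Fin.cons_zero, Fin.tail_cons, ht']
      omega

/-! ### Two-dimensional glue -/

def amap : Fin 4 → Fin 2 := ![0, 0, 1, 1]
def bmap : Fin 4 → Fin 2 := ![0, 1, 0, 1]
def emap (u v : Fin 2) : Fin 4 := ⟨u.val * 2 + v.val, by omega⟩

lemma amap_emap : ∀ u v : Fin 2, amap (emap u v) = u := by decide
lemma bmap_emap : ∀ u v : Fin 2, bmap (emap u v) = v := by decide

/-- product of two maps -/
def pm (f g : ℝ → ℝ) : ℝ × ℝ → ℝ × ℝ := fun p => (f p.1, g p.2)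

lemma ifsMap_eq (k : Fin 4) : ifsMap k = pm (gm (amap k)) (gm (bmap k)) := by
  fin_cases k <;> funext p <;>
    simp [ifsMap, gm, amap, bmap, pm, Prod.ext_iff] <;> norm_num

lemma ifsComp_succ {n : ℕ} (s : Fin (n+1) → Fin 4) :
    ifsComp s = ifsMap (s 0) ∘ ifsComp (Fin.tail s) := by
  simp only [ifsComp, List.ofFn_succ, List.foldr_cons]
  rfl

lemma ifsComp_eq : ∀ {n : ℕ} (s : Fin n → Fin 4),
    ifsComp s = pm (gComp (amap ∘ s)) (gComp (bmap ∘ s))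
  | 0, s => by
    funext p
    simp [ifsComp, gComp, pm]
  | n + 1, s => by
    rw [ifsComp_succ, ifsComp_eq (Fin.tail s), ifsMap_eq,
      gComp_succ (amap ∘ s), gComp_succ (bmap ∘ s)]
    rfl

lemma pm_image (f g : ℝ → ℝ) (s t : Set ℝ) :
    pm f g '' (s ×ˢ t) = (f '' s) ×ˢ (g '' t) :=
  (Set.prod_image_image_eq).symm

lemma image1 (n i : ℕ) :
    (fun x : ℝ => ((i:ℝ) + x) / 2 ^ n) '' Set.Icc 0 1 =
      Set.Icc ((i:ℝ)/2^n) (((i:ℝ)+1)/2^n) := by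
  have h : (fun x : ℝ => ((i:ℝ)+x)/2^n) = fun x => (1/2^n) * x + (i:ℝ)/2^n := by
    funext x; ring
  rw [h, Set.image_affine_Icc' (by positivity : (0:ℝ) < 1/2^n)]
  congr 1 <;> ring

/-- Image of one square under `cmap`. -/
lemma imageS (n : ℕ) (s : Fin n → Fin 4) :
    cmap n '' (ifsComp s '' Set.Icc ((0 : ℝ), (0 : ℝ)) (1, 1)) =
      dyadicSq n (idx (amap ∘ s)) (idx (bmap ∘ s)) := by
  obtain ⟨hix, cx, hcx, hmx⟩ := key n (amap ∘ s)
  obtain ⟨hiy, cy, hcy, hmy⟩ := key n (bmap ∘ s)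
  have hIcc : Set.Icc ((0:ℝ),(0:ℝ)) ((1:ℝ),(1:ℝ)) =
      (Set.Icc (0:ℝ) 1) ×ˢ (Set.Icc (0:ℝ) 1) := Set.Icc_prod_eq _ _
  have hcm : cmap n = pm (cseq n) (cseq n) := rfl
  rw [hIcc, ifsComp_eq s, hcm]
  rw [← Set.image_comp]
  have hcomp : pm (cseq n) (cseq n) ∘ pm (gComp (amap ∘ s)) (gComp (bmap ∘ s)) =
      pm (fun x => cseq n (gComp (amap ∘ s) x)) (fun x => cseq n (gComp (bmap ∘ s) x)) := rfl
  rw [hcomp, pm_image]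
  rw [Set.image_congr (fun x hx => (hmx x hx).2), Set.image_congr (fun x hx => (hmy x hx).2),
    image1, image1, dyadicSq, Set.Icc_prod_eq]

lemma dyadic_sub (n i j : ℕ) (hi : i < 2^n) (hj : j < 2^n) :
    dyadicSq n i j ⊆ Set.Icc ((0 : ℝ), (0 : ℝ)) (1, 1) := by
  have h2 : (0:ℝ) < 2^n := by positivity
  have hi' : (i:ℝ) + 1 ≤ 2^n := by
    have : (i:ℝ) + 1 ≤ ((2:ℕ)^n : ℕ) := by exact_mod_cast Nat.succ_le_of_lt hi
    simpa using this
  have hj' : (j:ℝ) + 1 ≤ 2^n := by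
    have : (j:ℝ) + 1 ≤ ((2:ℕ)^n : ℕ) := by exact_mod_cast Nat.succ_le_of_lt hj
    simpa using this
  apply Set.Icc_subset_Icc
  · constructor <;> simp <;> positivity
  · constructor <;> simp <;> rw [div_le_one h2]
    · exact hi'
    · exact hj'

lemma cover (n : ℕ) {x : ℝ} (hx : x ∈ Set.Icc (0:ℝ) 1) :
    ∃ i : ℕ, i < 2^n ∧ x ∈ Set.Icc ((i:ℝ)/2^n) (((i:ℝ)+1)/2^n) := by
  obtain ⟨hx0, hx1⟩ := hx
  have h2 : (0:ℝ) < 2^n := by positivity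
  rcases eq_or_lt_of_le hx1 with h1 | h1
  · refine ⟨2^n - 1, by have := Nat.one_le_two_pow (n := n); omega, ?_, ?_⟩
    · have hc : ((2^n - 1 : ℕ) : ℝ) = 2^n - 1 := by
        push_cast [Nat.one_le_two_pow]; ring
      rw [hc, h1, div_le_one h2]; linarith
    · have hc : ((2^n - 1 : ℕ) : ℝ) + 1 = 2^n := by
        push_cast [Nat.one_le_two_pow]; ring
      rw [hc, h1, le_div_iff₀ h2]; linarith
  · set i := (⌊x * 2^n⌋).toNat with hidef
    have hge : (0:ℝ) ≤ x * 2^n := by positivity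
    have hnn : 0 ≤ ⌊x * 2^n⌋ := Int.floor_nonneg.mpr hge
    have hcast : ((i:ℕ):ℝ) = ((⌊x * 2^n⌋ : ℤ) : ℝ) := by
      rw [hidef]; exact_mod_cast Int.toNat_of_nonneg hnn
    have hiub : (i:ℝ) ≤ x * 2^n := by rw [hcast]; exact Int.floor_le _
    have hilt : x * 2^n < (i:ℝ) + 1 := by rw [hcast]; exact Int.lt_floor_add_one _
    refine ⟨i, ?_, ?_, ?_⟩
    · have : (i:ℝ) < 2^n := by nlinarith
      exact_mod_cast this
    · rw [div_le_iff₀ h2]; linarith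
    · rw [le_div_iff₀ h2]; linarith

/-- Affine maps on the plane of the form `(x, y) ↦ (r x + d₁, r y + d₂)`. -/
noncomputable def affSq (r d1 d2 : ℝ) : ℝ × ℝ →ᵃ[ℝ] ℝ × ℝ where
  toFun p := (r * p.1 + d1, r * p.2 + d2)
  linear := r • LinearMap.id
  map_vadd' p v := by
    simp [Prod.ext_iff]
    constructor <;> ring

theorem stmt12 (n : ℕ) :
    (∀ s : Fin n → Fin 4, ∃ i j : ℕ, i < 2 ^ n ∧ j < 2 ^ n ∧
      (∃ A : ℝ × ℝ →ᵃ[ℝ] ℝ × ℝ,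
        ∀ p ∈ ifsComp s '' Set.Icc ((0 : ℝ), (0 : ℝ)) (1, 1), cmap n p = A p) ∧
      cmap n '' (ifsComp s '' Set.Icc ((0 : ℝ), (0 : ℝ)) (1, 1)) = dyadicSq n i j) ∧
    (∀ i j : ℕ, i < 2 ^ n → j < 2 ^ n → ∃ s : Fin n → Fin 4,
      cmap n '' (ifsComp s '' Set.Icc ((0 : ℝ), (0 : ℝ)) (1, 1)) = dyadicSq n i j) ∧
    cmap n '' (⋃ s : Fin n → Fin 4, ifsComp s '' Set.Icc ((0 : ℝ), (0 : ℝ)) (1, 1)) =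
      Set.Icc ((0 : ℝ), (0 : ℝ)) (1, 1) := by
  have hIcc : Set.Icc ((0:ℝ),(0:ℝ)) ((1:ℝ),(1:ℝ)) =
      (Set.Icc (0:ℝ) 1) ×ˢ (Set.Icc (0:ℝ) 1) := Set.Icc_prod_eq _ _
  have h2 : (2:ℝ) ^ n ≠ 0 := by positivity
  have h3 : (3:ℝ) ^ n ≠ 0 := by positivity
  refine ⟨?_, ?_, ?_⟩
  · -- part 1
    intro s
    obtain ⟨hix, cx, hcx, hmx⟩ := key n (amap ∘ s)
    obtain ⟨hiy, cy, hcy, hmy⟩ := key n (bmap ∘ s)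
    refine ⟨idx (amap ∘ s), idx (bmap ∘ s), hix, hiy, ?_, imageS n s⟩
    refine ⟨affSq (3^n / 2^n) (((idx (amap ∘ s) : ℝ) - 3^n * cx) / 2^n)
      (((idx (bmap ∘ s) : ℝ) - 3^n * cy) / 2^n), ?_⟩
    intro p hp
    rw [ifsComp_eq s, hIcc, pm_image] at hp
    obtain ⟨hp1, hp2⟩ := hp
    obtain ⟨x, hxI, hxv⟩ := hp1
    obtain ⟨y, hyI, hyv⟩ := hp2
    have e1 : cseq n p.1 = ((idx (amap ∘ s) : ℝ) + x) / 2 ^ n := by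
      rw [← hxv]; exact (hmx x hxI).2
    have e2 : cseq n p.2 = ((idx (bmap ∘ s) : ℝ) + y) / 2 ^ n := by
      rw [← hyv]; exact (hmy y hyI).2
    have f1 : p.1 = x / 3^n + cx := by rw [← hxv, hcx]
    have f2 : p.2 = y / 3^n + cy := by rw [← hyv, hcy]
    show (cseq n p.1, cseq n p.2) = _
    have hA : affSq (3^n / 2^n) (((idx (amap ∘ s) : ℝ) - 3^n * cx) / 2^n)
        (((idx (bmap ∘ s) : ℝ) - 3^n * cy) / 2^n) p =
        ((3^n / 2^n) * p.1 + ((idx (amap ∘ s) : ℝ) - 3^n * cx) / 2^n,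
         (3^n / 2^n) * p.2 + ((idx (bmap ∘ s) : ℝ) - 3^n * cy) / 2^n) := rfl
    rw [hA, e1, e2, f1, f2, Prod.ext_iff]
    constructor <;> · simp only []; field_simp; ring
  · -- part 2
    intro i j hi hj
    obtain ⟨tx, htx⟩ := idx_surj n i hi
    obtain ⟨ty, hty⟩ := idx_surj n j hj
    refine ⟨fun k => emap (tx k) (ty k), ?_⟩
    have ha : amap ∘ (fun k => emap (tx k) (ty k)) = tx := by
      funext k; exact amap_emap _ _
    have hb : bmap ∘ (fun k => emap (tx k) (ty k)) = ty := by
      funext k; exact bmap_emap _ _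
    rw [imageS, ha, hb, htx, hty]
  · -- part 3
    rw [Set.image_iUnion]
    apply Set.Subset.antisymm
    · apply Set.iUnion_subset
      intro s
      rw [imageS]
      exact dyadic_sub n _ _ (key n (amap ∘ s)).1 (key n (bmap ∘ s)).1
    · intro p hp
      rw [hIcc] at hp
      obtain ⟨hp1, hp2⟩ := hp
      obtain ⟨i, hi, hmi⟩ := cover n hp1
      obtain ⟨j, hj, hmj⟩ := cover n hp2
      obtain ⟨tx, htx⟩ := idx_surj n i hi
      obtain ⟨ty, hty⟩ := idx_surj n j hj
      refine Set.mem_iUnion.2 ⟨fun k => emap (tx k) (ty k), ?_⟩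
      have ha : amap ∘ (fun k => emap (tx k) (ty k)) = tx := by
        funext k; exact amap_emap _ _
      have hb : bmap ∘ (fun k => emap (tx k) (ty k)) = ty := by
        funext k; exact bmap_emap _ _
      rw [imageS, ha, hb, htx, hty, dyadicSq, Set.Icc_prod_eq]
      exact ⟨hmi, hmj⟩
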